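/- arXiv:1901.06801 — 2 statements merged into one kernel-verified Lean document; each statement's English description precedes it below -/
import Mathlib

section
/- Let S_G = (Pos, Neg, Ex, Un) be a game sample over a domain D and let H ⊆ D be consistent with S_G. Then the complement D \ H is consistent with the Horn sample S_H obtained by the translation: each positive example d yields the Horn constraint d → false; each negative example d yields true → d; each existential counterexample d → (d1 ∨ ... ∨ dn) yields (d1 ∧ ... ∧ dn) → d; each universal counterexample d → (d1 ∧ ... ∧ dn) yields the constraints d1 → d, ..., dn → d. Conversely, if D \ H is consistent with S_H then H is consistent with S_G. -/
/-- Consistency of a set `H` with a game sample `(Pos, Neg, Ex, Un)`. -/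
def GameConsistent {D : Type*} (H : Set D) (Pos Neg : List D)
    (Ex Un : List (D × List D)) : Prop :=
  (∀ d ∈ Pos, d ∈ H) ∧ (∀ d ∈ Neg, d ∉ H) ∧
  (∀ p ∈ Ex, p.1 ∈ H → ∃ d ∈ p.2, d ∈ H) ∧
  (∀ p ∈ Un, p.1 ∈ H → ∀ d ∈ p.2, d ∈ H)

/-- A Horn constraint is a pair of a body (conjunction of data points) and a
head, which is either a data point (`some d`) or `false` (`none`). -/
def HornConsistent {D : Type*} (A : Set D) (S : List (List D × Option D)) : Prop :=
  ∀ c ∈ S, (∀ d ∈ c.1, d ∈ A) →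
    match c.2 with
    | some d => d ∈ A
    | none => False

/-- The translation of a game sample into a Horn sample (Step 1 of Algorithm 1). -/
def toHornSample {D : Type*} (Pos Neg : List D) (Ex Un : List (D × List D)) :
    List (List D × Option D) :=
  (Pos.map fun d => ([d], none)) ++
  (Neg.map fun d => ([], some d)) ++
  (Ex.map fun p => (p.2, some p.1)) ++
  (Un.flatMap fun p => p.2.map fun di => ([di], some p.1))

theorem stmt_6 {D : Type*} (H : Set D) (Pos Neg : List D)
    (Ex Un : List (D × List D)) :
    GameConsistent H Pos Neg Ex Un ↔
      HornConsistent Hᶜ (toHornSample Pos Neg Ex Un) := by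
  constructor
  · rintro ⟨hP, hN, hE, hU⟩ c hc hbody
    simp only [toHornSample, List.mem_append, List.mem_map, List.mem_flatMap] at hc
    rcases hc with ((⟨d, hd, rfl⟩ | ⟨d, hd, rfl⟩) | ⟨p, hp, rfl⟩) | ⟨p, hp, di, hdi, rfl⟩
    · exact hbody d (by simp) (hP d hd)
    · exact hN d hd
    · simp only [Set.mem_compl_iff]
      intro h1
      obtain ⟨d, hd, hdH⟩ := hE p hp h1
      exact hbody d hd hdH
    · simp only [Set.mem_compl_iff]
      intro h1
      exact hbody di (by simp) (hU p hp h1 di hdi)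
  · intro h
    refine ⟨?_, ?_, ?_, ?_⟩
    · intro d hd
      by_contra hdH
      exact h ([d], none) (by simp only [toHornSample, List.mem_append, List.mem_map, List.mem_flatMap]; exact Or.inl (Or.inl (Or.inl ⟨d, hd, rfl⟩)))
        (by simpa using hdH)
    · intro d hd hdH
      exact h ([], some d) (by simp only [toHornSample, List.mem_append, List.mem_map, List.mem_flatMap]; exact Or.inl (Or.inl (Or.inr ⟨d, hd, rfl⟩)))
        (by simp) hdH
    · intro p hp h1
      by_contra hno
      push_neg at hno
      exact h (p.2, some p.1) (by simp only [toHornSample, List.mem_append, List.mem_map, List.mem_flatMap]; exact Or.inl (Or.inr ⟨p, hp, rfl⟩))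
        (fun d hd => hno d hd) h1
    · intro p hp h1 d hd
      by_contra hdH
      exact h ([d], some p.1)
        (by simp only [toHornSample, List.mem_append, List.mem_map, List.mem_flatMap]; exact Or.inr ⟨p, hp, d, hd, rfl⟩)
        (by simpa using hdH) h1
end

section
/- A decision tree t over domain D is consistent with a game sample S_G (meaning D(t) is consistent with S_G) if and only if the flipped tree t' (with all leaf labels negated) is consistent with the Horn sample S_H obtained from S_G by the translation of Algorithm 1. -/
inductive DTree (D : Type*) where
  | leaf (b : Bool)
  | node (p : D → Bool) (l r : DTree D)

def DTree.eval {D : Type*} : DTree D → D → Bool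
  | .leaf b, _ => b
  | .node p l r, d => if p d then l.eval d else r.eval d

def DTree.setOf {D : Type*} (t : DTree D) : Set D := {d | t.eval d = true}

def DTree.flip {D : Type*} : DTree D → DTree D
  | .leaf b => .leaf (!b)
  | .node p l r => .node p l.flip r.flip

lemma flip_eval {D : Type*} (t : DTree D) (d : D) : t.flip.eval d = !t.eval d := by
  induction t with
  | leaf b => rfl
  | node p l r ihl ihr => simp [DTree.flip, DTree.eval, ihl, ihr]; split <;> simp [*]

theorem stmt_17 {D : Type*} (t : DTree D) (Pos Neg : List D)
    (Ex Un : List (D × List D)) :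
    GameConsistent t.setOf Pos Neg Ex Un ↔
      HornConsistent t.flip.setOf (toHornSample Pos Neg Ex Un) := by
  have hmem : ∀ d, d ∈ t.flip.setOf ↔ d ∉ t.setOf := by
    intro d
    simp [DTree.setOf, flip_eval]
  constructor
  · rintro ⟨h1, h2, h3, h4⟩ c hc hpre
    simp only [toHornSample, List.mem_append, List.mem_map, List.mem_flatMap] at hc
    rcases hc with ((⟨d, hd, rfl⟩ | ⟨d, hd, rfl⟩) | ⟨p, hp, rfl⟩) | ⟨p, hp, di, hdi, rfl⟩
    · exact (hmem d).mp (hpre d (by simp)) (h1 d hd)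
    · exact (hmem d).mpr (h2 d hd)
    · simp only
      rw [hmem]
      intro hin
      obtain ⟨e, he, hein⟩ := h3 p hp hin
      exact (hmem e).mp (hpre e he) hein
    · simp only
      rw [hmem]
      intro hin
      exact (hmem di).mp (hpre di (by simp)) (h4 p hp hin di hdi)
  · intro h
    refine ⟨?_, ?_, ?_, ?_⟩
    · intro d hd
      by_contra hnot
      exact h ([d], none) (by simp only [toHornSample, List.mem_append, List.mem_map]; exact Or.inl (Or.inl (Or.inl ⟨d, hd, rfl⟩))) (by simpa using (hmem d).mpr hnot)
    · intro d hd hdin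
      have := h ([], some d) (by simp only [toHornSample, List.mem_append, List.mem_map]; exact Or.inl (Or.inl (Or.inr ⟨d, hd, rfl⟩))) (by simp)
      exact (hmem d).mp this hdin
    · intro p hp hin
      by_contra hnot
      push_neg at hnot
      have := h (p.2, some p.1) (by simp only [toHornSample, List.mem_append, List.mem_map]; exact Or.inl (Or.inr ⟨p, hp, rfl⟩))
        (fun e he => (hmem e).mpr (hnot e he))
      exact (hmem p.1).mp this hin
    · intro p hp hin di hdi
      by_contra hnot
      have := h ([di], some p.1)
        (by simp only [toHornSample, List.mem_append, List.mem_map, List.mem_flatMap]; exact Or.inr ⟨p, hp, di, hdi, rfl⟩)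
        (by simpa using (hmem di).mpr hnot)
      exact (hmem p.1).mp this hin
end
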